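/- Let x = (x₁, x₂) : ℝ → ℝ² and v = (v₁, v₂) : ℝ → ℝ² be differentiable functions satisfying the characteristic ODE system dx₁/dt = −v₁(v₂ − x₁), dx₂/dt = v₂(x₁ − v₂) − ½(v₁² + v₂²), dv₁/dt = v₂(v₂ − x₁), dv₂/dt = −v₁(v₂ − x₁). Then the quantity x₁(t) − v₂(t) is constant in time: x₁(t) − v₂(t) = x₁(0) − v₂(0) for all t ∈ ℝ. -/

import Mathlib

/-- Along the characteristics of the limiting gyrokinetic equation (without
electric field), the quantity `x₁ − v₂` is conserved. -/
theorem characteristic_invariant_x1_sub_v2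
    (x₁ x₂ v₁ v₂ : ℝ → ℝ)
    (hx₁ : ∀ t, HasDerivAt x₁ (-(v₁ t) * (v₂ t - x₁ t)) t)
    (hx₂ : ∀ t, HasDerivAt x₂
      (v₂ t * (x₁ t - v₂ t) - (1 / 2) * ((v₁ t) ^ 2 + (v₂ t) ^ 2)) t)
    (hv₁ : ∀ t, HasDerivAt v₁ (v₂ t * (v₂ t - x₁ t)) t)
    (hv₂ : ∀ t, HasDerivAt v₂ (-(v₁ t) * (v₂ t - x₁ t)) t) :
    ∀ t : ℝ, x₁ t - v₂ t = x₁ 0 - v₂ 0 := by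
  have h : ∀ t : ℝ, HasDerivAt (fun t => x₁ t - v₂ t) 0 t := by
    intro t
    have := (hx₁ t).sub (hv₂ t)
    rw [sub_self] at this
    exact this
  intro t
  exact is_const_of_deriv_eq_zero (fun t => (h t).differentiableAt)
    (fun t => (h t).deriv) t 0
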